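/- arXiv:1509.07352 — 2 statements merged into one kernel-verified Lean document; each statement's English description precedes it below -/
import Mathlib

section
/- For all j ≥ 1 and n, r ≥ 0, p^r_j(n) = (1/2) Σ_{s=0}^{∞} p^{r+s}_{j−1}(n) / 2^s, where the sum converges. -/
/-- `p r j n` : the number of restricted barred preferential arrangements of an `n`-set with
`r` restricted sections and `j` free sections, given by the convergent series
`p^r_j(n) = \sum_{s=0}^\infty C(j+s-1, s) (r+s)^n / 2^(j+s)`
(the coefficient of `m^n/n!` in `e^{rm}/(2-e^m)^j`). -/
noncomputable def p (r j n : ℕ) : ℝ :=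
  ∑' s : ℕ, ((j + s - 1).choose s : ℝ) * ((r + s : ℕ) : ℝ) ^ n / 2 ^ (j + s)

noncomputable def a (r j n : ℕ) (s : ℕ) : ℝ :=
  ((j + s - 1).choose s : ℝ) * ((r + s : ℕ) : ℝ) ^ n / 2 ^ (j + s)

lemma hockey (j k : ℕ) :
    ∑ t ∈ Finset.range (k + 1), (j + t - 1).choose t = (j + k).choose k := by
  induction k with
  | zero => simp
  | succ k ih =>
      rw [Finset.sum_range_succ, ih]
      have h1 : j + (k + 1) - 1 = j + k := by omega
      have h2 : j + (k + 1) = (j + k) + 1 := by omega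
      rw [h1, h2, Nat.choose_succ_succ]

lemma summable_aux (m : ℕ) : Summable (fun k : ℕ => ((k : ℝ) + 1) ^ m * (1 / 2) ^ k) := by
  have h : Summable (fun k : ℕ => ((k : ℝ)) ^ m * (1 / 2 : ℝ) ^ k) := by
    simpa using summable_pow_mul_geometric_of_norm_lt_one (R := ℝ) m
      (r := 1 / 2) (by norm_num)
  have h1 : Summable (fun k : ℕ => ((k + 1 : ℕ) : ℝ) ^ m * (1 / 2 : ℝ) ^ (k + 1)) :=
    (summable_nat_add_iff 1).2 h
  have := h1.mul_left 2
  refine this.congr fun k => ?_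
  push_cast
  ring

lemma a_nonneg (r j n s : ℕ) : 0 ≤ a r j n s := by
  unfold a; positivity

lemma summable_a (r j n : ℕ) : Summable (a r j n) := by
  refine Summable.of_nonneg_of_le (fun s => a_nonneg r j n s) (fun k => ?_)
    (((summable_aux (j + n)).mul_left (((j : ℝ) + 1) ^ j * ((r : ℝ) + 1) ^ n)))
  unfold a
  rw [div_le_iff₀ (by positivity)]
  have hc : ((j + k - 1).choose k : ℝ) ≤ ((j : ℝ) + 1) ^ j * ((k : ℝ) + 1) ^ j := by
    have h1 : (j + k - 1).choose k ≤ (j + k).choose k :=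
      Nat.choose_le_choose k (show j + k - 1 ≤ j + k by omega)
    have h2 : (j + k).choose k = (j + k).choose j := by
      rw [Nat.add_comm j k]
      exact Nat.choose_symm_add
    have h3 : (j + k).choose j ≤ (j + k) ^ j := Nat.choose_le_pow _ _
    have h4 : ((j + k : ℕ) : ℝ) ^ j ≤ (((j : ℝ) + 1) * ((k : ℝ) + 1)) ^ j := by
      apply pow_le_pow_left₀ (by positivity)
      push_cast; nlinarith [Nat.cast_nonneg (α := ℝ) j, Nat.cast_nonneg (α := ℝ) k]
    calc ((j + k - 1).choose k : ℝ) ≤ ((j + k) ^ j : ℕ) := by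
          exact_mod_cast h1.trans (h2 ▸ h3)
      _ ≤ (((j : ℝ) + 1) * ((k : ℝ) + 1)) ^ j := by push_cast at h4 ⊢; exact h4
      _ = ((j : ℝ) + 1) ^ j * ((k : ℝ) + 1) ^ j := mul_pow _ _ _
  have hp : ((r + k : ℕ) : ℝ) ^ n ≤ ((r : ℝ) + 1) ^ n * ((k : ℝ) + 1) ^ n := by
    rw [← mul_pow]
    apply pow_le_pow_left₀ (by positivity)
    push_cast; nlinarith [Nat.cast_nonneg (α := ℝ) r, Nat.cast_nonneg (α := ℝ) k]
  have h2 : ((2 : ℝ)) ^ (j + k) ≥ 2 ^ k := by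
    apply pow_le_pow_right₀ (by norm_num); omega
  calc ((j + k - 1).choose k : ℝ) * ((r + k : ℕ) : ℝ) ^ n
      ≤ (((j : ℝ) + 1) ^ j * ((k : ℝ) + 1) ^ j) * (((r : ℝ) + 1) ^ n * ((k : ℝ) + 1) ^ n) := by
        apply mul_le_mul hc hp (by positivity) (by positivity)
    _ = (((j : ℝ) + 1) ^ j * ((r : ℝ) + 1) ^ n * (((k : ℝ) + 1) ^ (j + n) * (1 / 2) ^ k)) * 2 ^ k := by
        have hk : ((1:ℝ) / 2) ^ k * 2 ^ k = 1 := by rw [← mul_pow]; norm_num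
        rw [pow_add]; linear_combination (-(((j:ℝ)+1)^j*((k:ℝ)+1)^j*((r:ℝ)+1)^n*((k:ℝ)+1)^n)) * hk
    _ ≤ (((j : ℝ) + 1) ^ j * ((r : ℝ) + 1) ^ n * (((k : ℝ) + 1) ^ (j + n) * (1 / 2) ^ k)) * 2 ^ (j + k) := by
        apply mul_le_mul_of_nonneg_left h2 (by positivity)

lemma key (r j' n k : ℕ) :
    ∑ q ∈ Finset.HasAntidiagonal.antidiagonal k, a (r + q.1) j' n q.2 / 2 ^ (q.1 + 1)
      = a r (j' + 1) n k := by
  rw [Finset.Nat.sum_antidiagonal_eq_sum_range_succ_mk]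
  have step : ∀ i ∈ Finset.range (k + 1),
      a (r + i) j' n (k - i) / 2 ^ (i + 1)
        = ((j' + (k - i) - 1).choose (k - i) : ℝ) * ((r + k : ℕ) : ℝ) ^ n / 2 ^ (j' + 1 + k) := by
    intro i hi
    rw [Finset.mem_range] at hi
    unfold a
    rw [div_div, ← pow_add]
    have e1 : r + i + (k - i) = r + k := by omega
    have e2 : j' + (k - i) + (i + 1) = j' + 1 + k := by omega
    rw [e1, e2]
  rw [Finset.sum_congr rfl step]
  unfold a
  rw [← Finset.sum_div, ← Finset.sum_mul, ← Nat.cast_sum]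
  have : ∑ i ∈ Finset.range (k + 1), (j' + (k - i) - 1).choose (k - i)
      = (j' + 1 + k - 1).choose k := by
    have := Finset.sum_range_reflect (fun t => (j' + t - 1).choose t) (k + 1)
    simp only [Nat.add_sub_cancel] at this
    calc ∑ i ∈ Finset.range (k + 1), (j' + (k - i) - 1).choose (k - i)
        = ∑ t ∈ Finset.range (k + 1), (j' + t - 1).choose t := this
      _ = (j' + k).choose k := hockey j' k
      _ = (j' + 1 + k - 1).choose k := by congr 1; omega
  rw [this]

lemma p_eq (r j n : ℕ) : p r j n = ∑' s, a r j n s := rfl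

theorem stmt5 (r j n : ℕ) (hj : 1 ≤ j) :
    Summable (fun s : ℕ => p (r + s) (j - 1) n / 2 ^ s) ∧
    p r j n = (1 / 2) * ∑' s : ℕ, p (r + s) (j - 1) n / 2 ^ s := by
  obtain ⟨j', rfl⟩ : ∃ j', j = j' + 1 := ⟨j - 1, by omega⟩
  simp only [Nat.add_sub_cancel]
  set F : ℕ × ℕ → ℝ := fun q => a (r + q.1) j' n q.2 / 2 ^ (q.1 + 1) with hFdef
  have hFnn : ∀ q, 0 ≤ F q := fun q => div_nonneg (a_nonneg _ _ _ _) (by positivity)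
  set e := Finset.HasAntidiagonal.sigmaAntidiagonalEquivProd (A := ℕ) with he
  have hfiber : ∀ k : ℕ,
      ∑' c : (Finset.HasAntidiagonal.antidiagonal k : Finset (ℕ × ℕ)), (F ∘ e) ⟨k, c⟩ = a r (j' + 1) n k := by
    intro k
    have h1 : ∀ c : (Finset.HasAntidiagonal.antidiagonal k : Finset (ℕ × ℕ)), (F ∘ e) ⟨k, c⟩ = F c := by
      intro c; rfl
    calc ∑' c : (Finset.HasAntidiagonal.antidiagonal k : Finset (ℕ × ℕ)), (F ∘ e) ⟨k, c⟩
        = ∑' c : (Finset.HasAntidiagonal.antidiagonal k : Finset (ℕ × ℕ)), F c := by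
          exact tsum_congr h1
      _ = ∑ q ∈ Finset.HasAntidiagonal.antidiagonal k, F q := Finset.tsum_subtype _ _
      _ = a r (j' + 1) n k := key r j' n k
  have hFe : Summable (F ∘ e) := by
    refine (summable_sigma_of_nonneg fun x => hFnn _).2 ⟨fun k => ?_, ?_⟩
    · exact Summable.of_finite
    · exact (summable_a r (j' + 1) n).congr fun k => (hfiber k).symm
  have hF : Summable F := e.summable_iff.1 hFe
  have hrowsum : ∀ s : ℕ, HasSum (fun t => F (s, t)) (p (r + s) j' n / 2 ^ (s + 1)) := by
    intro s
    have h2 : ∑' t, F (s, t) = p (r + s) j' n / 2 ^ (s + 1) := by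
      simp only [hFdef]
      rw [tsum_div_const, p_eq]
    exact h2 ▸ (hF.prod_factor s).hasSum
  have hg : HasSum (fun s => p (r + s) j' n / 2 ^ (s + 1)) (∑' q, F q) :=
    hF.hasSum.prod_fiberwise hrowsum
  have hcongr : ∀ s : ℕ, 2 * (p (r + s) j' n / 2 ^ (s + 1)) = p (r + s) j' n / 2 ^ s := by
    intro s; rw [pow_succ]; field_simp
  constructor
  · exact (hg.summable.mul_left 2).congr hcongr
  · have h3 : ∑' s : ℕ, p (r + s) j' n / 2 ^ s
        = 2 * ∑' q, F q := by
      rw [← hg.tsum_eq, ← tsum_mul_left]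
      exact tsum_congr fun s => (hcongr s).symm
    have h4 : ∑' q, F q = ∑' k, a r (j' + 1) n k := by
      calc ∑' q, F q = ∑' x, (F ∘ e) x := (e.tsum_eq F).symm
        _ = ∑' (k : ℕ) (c : (Finset.HasAntidiagonal.antidiagonal k : Finset (ℕ × ℕ))), (F ∘ e) ⟨k, c⟩ :=
            hFe.tsum_sigma' (fun k => Summable.of_finite)
        _ = ∑' k, a r (j' + 1) n k := tsum_congr hfiber
    rw [h3, p_eq, h4]
    ring
end

section
/- For integers r ≥ 3, j ≥ 1, and all n ≥ 0, p^{r−3}_{j−1}(n) = Σ_{s=0}^{n} C(n,s) (−1)^s (2·3^s − 2^s) · p^r_j(n−s). -/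
/-- Auxiliary: the general term of the series defining `p`. -/
noncomputable def q (a b n s : ℕ) : ℝ :=
  ((b + s - 1).choose s : ℝ) * ((a + s : ℕ) : ℝ) ^ n / 2 ^ (b + s)

lemma p_eq_tsum_q (a b n : ℕ) : p a b n = ∑' s, q a b n s := rfl

lemma q_nonneg (a b n s : ℕ) : 0 ≤ q a b n s := by
  unfold q; positivity

lemma choose_bound (b s : ℕ) : (b + s - 1).choose s ≤ (b + s) ^ b := by
  cases b with
  | zero =>
    cases s with
    | zero => simp
    | succ t =>
      simp only [Nat.zero_add, pow_zero]
      rw [Nat.choose_eq_zero_of_lt (by omega)]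
      omega
  | succ b' =>
    have h1 : b' + 1 + s - 1 = b' + s := by omega
    rw [h1]
    have h2 : (b' + s).choose s = (b' + s).choose b' :=
      Nat.choose_symm_of_eq_add (by omega)
    rw [h2]
    calc (b' + s).choose b' ≤ (b' + s) ^ b' := Nat.choose_le_pow _ _
      _ ≤ (b' + 1 + s) ^ b' := Nat.pow_le_pow_left (by omega) _
      _ ≤ (b' + 1 + s) ^ (b' + 1) := Nat.pow_le_pow_right (by omega) (by omega)

lemma aux_geo (K : ℕ) : Summable (fun s : ℕ => ((s : ℝ) + 1) ^ K * (1 / 2 : ℝ) ^ s) := by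
  have h : Summable (fun u : ℕ => (u : ℝ) ^ K * (1 / 2 : ℝ) ^ u) := by
    apply summable_pow_mul_geometric_of_norm_lt_one
    rw [Real.norm_eq_abs]
    rw [abs_of_nonneg (by norm_num)]
    norm_num
  have h2 : Summable (fun s : ℕ => ((s + 1 : ℕ) : ℝ) ^ K * (1 / 2 : ℝ) ^ (s + 1)) :=
    (summable_nat_add_iff 1).2 h
  have h3 : (fun s : ℕ => ((s : ℝ) + 1) ^ K * (1 / 2 : ℝ) ^ s)
      = fun s : ℕ => 2 * (((s + 1 : ℕ) : ℝ) ^ K * (1 / 2 : ℝ) ^ (s + 1)) := by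
    funext s; push_cast; ring
  rw [h3]
  exact h2.mul_left 2

lemma q_summable (a b n : ℕ) : Summable (q a b n) := by
  set K := b + n with hK
  set C : ℝ := ((a + b + 1 : ℕ) : ℝ) ^ K with hC
  have hgeo : Summable (fun s : ℕ => C * (((s : ℝ) + 1) ^ K * (1 / 2 : ℝ) ^ s)) :=
    (aux_geo K).mul_left C
  apply Summable.of_nonneg_of_le (q_nonneg a b n) _ hgeo
  intro s
  unfold q
  rw [div_le_iff₀ (by positivity)]
  have hN : (b + s - 1).choose s * (a + s) ^ n ≤ (a + b + 1) ^ K * (s + 1) ^ K := by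
    calc (b + s - 1).choose s * (a + s) ^ n ≤ (b + s) ^ b * (a + s) ^ n :=
          Nat.mul_le_mul_right _ (choose_bound b s)
      _ ≤ ((a + b + 1) * (s + 1)) ^ b * ((a + b + 1) * (s + 1)) ^ n := by
          apply Nat.mul_le_mul
          · exact Nat.pow_le_pow_left (by nlinarith) _
          · exact Nat.pow_le_pow_left (by nlinarith) _
      _ = ((a + b + 1) * (s + 1)) ^ K := by rw [← pow_add]
      _ = (a + b + 1) ^ K * (s + 1) ^ K := by rw [mul_pow]
  have hnum : ((b + s - 1).choose s : ℝ) * ((a + s : ℕ) : ℝ) ^ n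
      ≤ C * ((s : ℝ) + 1) ^ K := by
    rw [hC]
    have := (Nat.cast_le (α := ℝ)).2 hN
    push_cast at this ⊢
    linarith
  have hhalf : ((1 : ℝ) / 2) ^ s * 2 ^ (b + s) = 2 ^ b := by
    rw [pow_add, div_pow, one_pow]
    field_simp
  have h1le : (1 : ℝ) ≤ 2 ^ b := one_le_pow₀ (by norm_num : (1:ℝ) ≤ 2)
  have hCpos : 0 ≤ C * ((s : ℝ) + 1) ^ K := by positivity
  calc ((b + s - 1).choose s : ℝ) * ((a + s : ℕ) : ℝ) ^ n
      ≤ C * ((s : ℝ) + 1) ^ K := hnum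
    _ = C * ((s : ℝ) + 1) ^ K * 1 := by ring
    _ ≤ C * ((s : ℝ) + 1) ^ K * 2 ^ b := by nlinarith
    _ = C * (((s : ℝ) + 1) ^ K * (1 / 2) ^ s) * 2 ^ (b + s) := by
        rw [mul_assoc, mul_assoc, mul_assoc, hhalf]

lemma q_zero (r j n : ℕ) (hr : 3 ≤ r) (hj : 1 ≤ j) :
    2 * q (r - 3) j n 0 = q (r - 3) (j - 1) n 0 := by
  unfold q
  have h1 : (j + 0 - 1).choose 0 = 1 := Nat.choose_zero_right _
  have h2 : (j - 1 + 0 - 1).choose 0 = 1 := Nat.choose_zero_right _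
  rw [h1, h2]
  rw [show j + 0 = (j - 1 + 0) + 1 by omega, pow_succ]
  have : (0:ℝ) < 2 ^ (j - 1 + 0) := by positivity
  field_simp
  ring

lemma q_succ (r j n t : ℕ) (hr : 3 ≤ r) (hj : 1 ≤ j) :
    2 * q (r - 3) j n (t + 1) = q (r - 3) (j - 1) n (t + 1) + q (r - 2) j n t := by
  unfold q
  have e1 : j + (t + 1) - 1 = (j + t - 1) + 1 := by omega
  have e2 : j - 1 + (t + 1) - 1 = j + t - 1 := by omega
  have e3 : r - 3 + (t + 1) = r - 2 + t := by omega
  have e4 : j - 1 + (t + 1) = j + t := by omega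
  have e5 : j + (t + 1) = (j + t) + 1 := by omega
  have e6 : t + 1 = (t) + 1 := rfl
  rw [e1, e2, e3, e4, e5]
  rw [Nat.choose_succ_succ]
  push_cast
  rw [pow_succ]
  have : (0:ℝ) < 2 ^ (j + t) := by positivity
  field_simp
  ring

lemma binom_step (r j n t : ℕ) (hr : 3 ≤ r) :
    ∑ s ∈ Finset.range (n + 1),
      (n.choose s : ℝ) * (-1) ^ s * (2 * 3 ^ s - 2 ^ s) * q r j (n - s) t
    = 2 * q (r - 3) j n t - q (r - 2) j n t := by
  unfold q
  set c : ℝ := ((j + t - 1).choose t : ℝ) with hc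
  set X : ℝ := ((r + t : ℕ) : ℝ) with hX
  have hX3 : ((r - 3 + t : ℕ) : ℝ) = X - 3 := by
    rw [hX]; push_cast [Nat.cast_sub (show 3 ≤ r from hr)]; ring
  have hX2 : ((r - 2 + t : ℕ) : ℝ) = X - 2 := by
    rw [hX]; push_cast [Nat.cast_sub (show 2 ≤ r by omega)]; ring
  rw [hX3, hX2]
  have h3 : (X - 3) ^ n = ∑ s ∈ Finset.range (n + 1),
      (-3 : ℝ) ^ s * X ^ (n - s) * (n.choose s) := by
    have := add_pow (-3 : ℝ) X n
    rw [show (-3 : ℝ) + X = X - 3 by ring] at this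
    rw [this]
  have h2 : (X - 2) ^ n = ∑ s ∈ Finset.range (n + 1),
      (-2 : ℝ) ^ s * X ^ (n - s) * (n.choose s) := by
    have := add_pow (-2 : ℝ) X n
    rw [show (-2 : ℝ) + X = X - 2 by ring] at this
    rw [this]
  rw [h3, h2]
  simp only [Finset.mul_sum, Finset.sum_div, ← Finset.sum_sub_distrib]
  apply Finset.sum_congr rfl
  intro s hs
  have e1 : (-3 : ℝ) ^ s = (-1) ^ s * 3 ^ s := by rw [neg_pow]
  have e2 : (-2 : ℝ) ^ s = (-1) ^ s * 2 ^ s := by rw [neg_pow]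
  rw [e1, e2]
  ring

theorem stmt12 (r j : ℕ) (hr : 3 ≤ r) (hj : 1 ≤ j) (n : ℕ) :
    p (r - 3) (j - 1) n = ∑ s ∈ Finset.range (n + 1),
      (n.choose s : ℝ) * (-1) ^ s * (2 * 3 ^ s - 2 ^ s) * p r j (n - s) := by
  have hS := q_summable
  have hrhs : ∑ s ∈ Finset.range (n + 1),
      (n.choose s : ℝ) * (-1) ^ s * (2 * 3 ^ s - 2 ^ s) * p r j (n - s)
      = ∑' t, (2 * q (r - 3) j n t - q (r - 2) j n t) := by
    have step1 : ∀ s, (n.choose s : ℝ) * (-1) ^ s * (2 * 3 ^ s - 2 ^ s) * p r j (n - s)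
        = ∑' t, (n.choose s : ℝ) * (-1) ^ s * (2 * 3 ^ s - 2 ^ s) * q r j (n - s) t := by
      intro s
      rw [p_eq_tsum_q, ← tsum_mul_left]
    simp_rw [step1]
    rw [← Summable.tsum_finsetSum (fun s _ => (hS r j (n - s)).mul_left _)]
    exact tsum_congr fun t => binom_step r j n t hr
  rw [hrhs, p_eq_tsum_q]
  have hA : Summable (fun t => 2 * q (r - 3) j n t) := (hS (r - 3) j n).mul_left 2
  have hB := hS (r - 2) j n
  have hG := hS (r - 3) (j - 1) n
  rw [Summable.tsum_sub hA hB]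
  have hGs : Summable (fun t => q (r - 3) (j - 1) n (t + 1)) :=
    (summable_nat_add_iff 1).2 hG
  have key : ∑' t, 2 * q (r - 3) j n t
      = (∑' t, q (r - 3) (j - 1) n t) + ∑' t, q (r - 2) j n t := by
    rw [Summable.tsum_eq_zero_add hA, Summable.tsum_eq_zero_add hG]
    have hcongr : ∀ t : ℕ, 2 * q (r - 3) j n (t + 1)
        = q (r - 3) (j - 1) n (t + 1) + q (r - 2) j n t := fun t => q_succ r j n t hr hj
    rw [tsum_congr hcongr, Summable.tsum_add hGs hB, q_zero r j n hr hj]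
    ring
  rw [key]
  ring
end
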